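/- The set of Roth type irrational numbers is invariant under the action of GL(2,ℤ) by fractional linear transformations: if θ is of Roth type and g = (a b; c d) ∈ GL(2,ℤ) with cθ + d ≠ 0, then (aθ + b)/(cθ + d) is of Roth type. -/

import Mathlib

/-- θ is of Roth type: for every ε > 0 there is C_ε > 0 with
`‖qθ‖ ≥ C_ε q^{-(1+ε)}` for all positive integers q, where `‖x‖ = |x - round x|`
is the distance to the nearest integer. -/
def IsRothType (θ : ℝ) : Prop :=
  ∀ ε : ℝ, 0 < ε → ∃ C : ℝ, 0 < C ∧ ∀ q : ℕ, 0 < q →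
    C * (q : ℝ) ^ (-(1 + ε)) ≤ |(q : ℝ) * θ - round ((q : ℝ) * θ)|

/-- The set of Roth type irrational numbers is invariant under the action
of GL(2,ℤ) by fractional linear transformations: if θ is of Roth type and
g = (a b; c d) ∈ GL(2,ℤ) with cθ + d ≠ 0, then (aθ + b)/(cθ + d) is of Roth type. -/
theorem rothType_invariant_GL2Z (θ : ℝ) (hθ : Irrational θ) (hroth : IsRothType θ)
    (a b c d : ℤ) (hdet : a * d - b * c = 1 ∨ a * d - b * c = -1)
    (hcd : (c : ℝ) * θ + (d : ℝ) ≠ 0) :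
    IsRothType (((a : ℝ) * θ + (b : ℝ)) / ((c : ℝ) * θ + (d : ℝ))) := by
  intro ε hε
  obtain ⟨C, hC, hCs⟩ := hroth ε hε
  set θ' : ℝ := ((a : ℝ) * θ + (b : ℝ)) / ((c : ℝ) * θ + (d : ℝ)) with hθ'
  set D : ℝ := |(c : ℝ) * θ + (d : ℝ)| with hD
  have hD0 : 0 < D := abs_pos.mpr hcd
  set K : ℝ := |(a : ℝ)| + |(c : ℝ)| * (|θ'| + 1) + 1 with hK
  have hK1 : 1 ≤ K := by
    have h1 : 0 ≤ |(a : ℝ)| := abs_nonneg _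
    have h2 : 0 ≤ |(c : ℝ)| * (|θ'| + 1) := by positivity
    linarith
  have hK0 : 0 < K := lt_of_lt_of_le one_pos hK1
  have hs : -(1 + ε) ≤ 0 := by linarith
  have hKrpow : 0 < K ^ (-(1 + ε)) := Real.rpow_pos_of_pos hK0 _
  refine ⟨min (C * K ^ (-(1 + ε))) 1 / D, by positivity, ?_⟩
  intro q hq
  set p : ℤ := round ((q : ℝ) * θ') with hp
  set q' : ℤ := a * (q : ℤ) - c * p with hq'
  set p' : ℤ := d * p - b * (q : ℤ) with hp'
  have hq0R : (0 : ℝ) < (q : ℝ) := by exact_mod_cast hq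
  have key : (q : ℝ) * θ' - p = ((q' : ℝ) * θ - p') / ((c : ℝ) * θ + d) := by
    rw [hθ']
    push_cast [hq', hp']
    rw [eq_div_iff hcd]
    simp only [sub_mul, mul_assoc, div_mul_cancel₀ _ hcd]
    ring
  have habs : |(q : ℝ) * θ' - p| = |(q' : ℝ) * θ - p'| / D := by
    rw [key, abs_div, hD]
  have hqε : (0 : ℝ) < (q : ℝ) ^ (-(1 + ε)) := Real.rpow_pos_of_pos hq0R _
  have hqε1 : (q : ℝ) ^ (-(1 + ε)) ≤ 1 :=
    Real.rpow_le_one_of_one_le_of_nonpos (by exact_mod_cast hq) hs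
  rw [habs]
  rw [div_mul_eq_mul_div, div_le_div_iff_of_pos_right hD0]
  -- It suffices to bound `|q'θ - p'|` from below.
  rcases eq_or_ne q' 0 with h0 | h0
  · -- q' = 0 : then p' ≠ 0 and |q'θ - p'| = |p'| ≥ 1
    have hcomb : d * q' + c * p' = (a * d - b * c) * (q : ℤ) := by
      rw [hq', hp']; ring
    have hp'0 : p' ≠ 0 := by
      intro hp'0
      rw [h0, hp'0] at hcomb
      simp only [mul_zero, zero_add] at hcomb
      rcases hdet with h | h <;> rw [h] at hcomb <;> omega
    have h1 : (1 : ℝ) ≤ |(q' : ℝ) * θ - p'| := by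
      rw [h0]
      push_cast
      rw [zero_mul, zero_sub, abs_neg]
      exact_mod_cast Int.one_le_abs hp'0
    have hmin1 : min (C * K ^ (-(1 + ε))) 1 ≤ 1 := min_le_right _ _
    have hmin0 : 0 ≤ min (C * K ^ (-(1 + ε))) 1 :=
      le_min (by positivity) zero_le_one
    nlinarith
  · -- q' ≠ 0 : use the Roth property of θ at n = |q'|
    set n : ℕ := q'.natAbs with hn
    have hn0 : 0 < n := Int.natAbs_pos.mpr h0
    have hn0R : (0 : ℝ) < (n : ℝ) := by exact_mod_cast hn0
    -- bound |p| and then n ≤ K * q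
    have hpb : |(p : ℝ)| ≤ (q : ℝ) * |θ'| + 1 := by
      have h1 : |(q : ℝ) * θ' - p| ≤ 1 / 2 := by rw [hp]; exact abs_sub_round _
      have h2 : |(p : ℝ)| ≤ |(q : ℝ) * θ'| + 1 / 2 := by
        have := abs_sub_abs_le_abs_sub ((q : ℝ) * θ') (p : ℝ)
        have h3 : |(q : ℝ) * θ' - (p : ℝ)| = |(p : ℝ) - (q : ℝ) * θ'| := abs_sub_comm _ _
        have := abs_sub_abs_le_abs_sub (p : ℝ) ((q : ℝ) * θ')
        linarith
      rw [abs_mul, abs_of_pos hq0R] at h2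
      linarith
    have hnK : (n : ℝ) ≤ K * q := by
      have h1 : (n : ℝ) = |(q' : ℝ)| := by
        rw [hn]; push_cast [Nat.cast_natAbs]; simp
      have h2 : |(q' : ℝ)| ≤ |(a : ℝ)| * q + |(c : ℝ)| * |(p : ℝ)| := by
        rw [hq']
        push_cast
        calc |(a : ℝ) * q - c * p| ≤ |(a : ℝ) * q| + |(c : ℝ) * p| := abs_sub _ _
          _ = |(a : ℝ)| * q + |(c : ℝ)| * |(p : ℝ)| := by
              rw [abs_mul, abs_mul, abs_of_pos hq0R]
      have hq1 : (1 : ℝ) ≤ (q : ℝ) := by exact_mod_cast hq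
      have hc0 : (0 : ℝ) ≤ |(c : ℝ)| := abs_nonneg _
      have hθ'0 : (0 : ℝ) ≤ |θ'| := abs_nonneg _
      rw [h1, hK]
      nlinarith [abs_nonneg (a : ℝ)]
    -- Roth bound at n
    have hroth_n := hCs n hn0
    -- distance minimality transfers to (q', p')
    have hmin : |(n : ℝ) * θ - round ((n : ℝ) * θ)| ≤ |(q' : ℝ) * θ - p'| := by
      rcases lt_or_gt_of_ne h0 with hneg | hpos
      · have hnq : (n : ℝ) = -(q' : ℝ) := by
          have h2 : (n : ℤ) = -q' := by rw [hn]; omega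
          exact_mod_cast h2
        calc |(n : ℝ) * θ - round ((n : ℝ) * θ)| ≤ |(n : ℝ) * θ - (-p' : ℤ)| :=
              round_le _ _
          _ = |(q' : ℝ) * θ - p'| := by
              rw [hnq]; push_cast; rw [show -(q' : ℝ) * θ - -(p' : ℝ)
                = -((q' : ℝ) * θ - p') by ring, abs_neg]
      · have hnq : (n : ℝ) = (q' : ℝ) := by
          have h2 : (n : ℤ) = q' := by rw [hn]; omega
          exact_mod_cast h2
        calc |(n : ℝ) * θ - round ((n : ℝ) * θ)| ≤ |(n : ℝ) * θ - (p' : ℤ)| :=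
              round_le _ _
          _ = |(q' : ℝ) * θ - p'| := by rw [hnq]
    -- rpow comparison
    have hcomp : C * (K * q) ^ (-(1 + ε)) ≤ C * (n : ℝ) ^ (-(1 + ε)) := by
      have := Real.rpow_le_rpow_of_nonpos hn0R hnK hs
      nlinarith [Real.rpow_pos_of_pos hn0R (-(1 + ε))]
    have hsplit : (K * q) ^ (-(1 + ε)) = K ^ (-(1 + ε)) * (q : ℝ) ^ (-(1 + ε)) :=
      Real.mul_rpow hK0.le hq0R.le
    have hminle : min (C * K ^ (-(1 + ε))) 1 * (q : ℝ) ^ (-(1 + ε))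
        ≤ C * (K * q) ^ (-(1 + ε)) := by
      rw [hsplit, ← mul_assoc]
      exact mul_le_mul_of_nonneg_right (min_le_left _ _) hqε.le
    linarith
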